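/- arXiv:math/0404002 — 3 statements merged into one kernel-verified Lean document; each statement's English description precedes it below -/
import Mathlib

section
/- For y > 0, the derivative with respect to s at s = 1 of ∫_1^∞ (t²-1)^{s-1} e^{-2πty} dt equals (1/(2πy))(Γ(0,4πy) e^{2πy} + (Γ'(1) - log(πy)) e^{-2πy}). -/
open Real MeasureTheory Set


/-- Translation of integrals on `Ioi`. -/
lemma my_integral_comp_add_right_Ioi (f : ℝ → ℝ) (a d : ℝ) :
    ∫ x in Ioi a, f (x + d) = ∫ x in Ioi (a + d), f x := by
  have h := (measurePreserving_add_right (volume : Measure ℝ) d).setIntegral_preimage_emb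
    (MeasurableEquiv.addRight d).measurableEmbedding f (Ioi (a + d))
  simpa using h

lemma my_integrableOn_comp_add_right_Ioi (f : ℝ → ℝ) (a d : ℝ) :
    IntegrableOn (fun x => f (x + d)) (Ioi a) ↔ IntegrableOn f (Ioi (a + d)) := by
  have h := (measurePreserving_add_right (volume : Measure ℝ) d).integrableOn_comp_preimage
    (MeasurableEquiv.addRight d).measurableEmbedding (f := f) (s := Ioi (a + d))
  simpa [Function.comp_def] using h

lemma my_gammaScaled {c : ℝ} (hc : 0 < c) {r : ℝ} (hr : -1 < r) :
    IntegrableOn (fun u : ℝ => u ^ r * Real.exp (-(c * u))) (Ioi 0) := by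
  have h := Real.GammaIntegral_convergent (s := r + 1) (by linarith)
  have h2 : IntegrableOn (fun x : ℝ => Real.exp (-(c * x)) * (c * x) ^ (r + 1 - 1)) (Ioi 0) := by
    have := (integrableOn_Ioi_comp_mul_left_iff
      (fun x : ℝ => Real.exp (-x) * x ^ (r + 1 - 1)) 0 hc).2 (by simpa using h)
    simpa using this
  have h3 : IntegrableOn (fun x : ℝ => c ^ r * (x ^ r * Real.exp (-(c * x)))) (Ioi 0) := by
    refine h2.congr_fun (fun x hx => ?_) measurableSet_Ioi
    beta_reduce
    rw [add_sub_cancel_right, Real.mul_rpow hc.le (le_of_lt hx)]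
    ring
  have h4 : IntegrableOn (fun x : ℝ => c ^ (-r) * (c ^ r * (x ^ r * Real.exp (-(c * x)))))
      (Ioi 0) := h3.const_mul _
  refine h4.congr_fun (fun x _ => ?_) measurableSet_Ioi
  beta_reduce
  rw [← mul_assoc, ← Real.rpow_add hc, neg_add_cancel, Real.rpow_zero, one_mul]

lemma my_abs_log_le {b : ℝ} (hb : 0 < b) :
    |Real.log b| ≤ 4 * (b ^ (4⁻¹:ℝ) + b ^ (-(4⁻¹:ℝ))) := by
  have h1 : Real.log (b ^ (4⁻¹:ℝ)) ≤ b ^ (4⁻¹:ℝ) - 1 :=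
    Real.log_le_sub_one_of_pos (Real.rpow_pos_of_pos hb _)
  have h2 : Real.log (b ^ (-(4⁻¹:ℝ))) ≤ b ^ (-(4⁻¹:ℝ)) - 1 :=
    Real.log_le_sub_one_of_pos (Real.rpow_pos_of_pos hb _)
  rw [Real.log_rpow hb] at h1 h2
  have p1 : (0:ℝ) ≤ b ^ (4⁻¹:ℝ) := (Real.rpow_pos_of_pos hb _).le
  have p2 : (0:ℝ) ≤ b ^ (-(4⁻¹:ℝ)) := (Real.rpow_pos_of_pos hb _).le
  rcases abs_cases (Real.log b) with ⟨h,_⟩|⟨h,_⟩ <;> rw [h] <;> nlinarith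

lemma my_rpow_le {b p q : ℝ} (hb : 0 < b) (hq : |q| ≤ p) : b ^ q ≤ b ^ p + b ^ (-p) := by
  rcases le_or_gt 1 b with h|h
  · have h3 : b ^ q ≤ b ^ p := Real.rpow_le_rpow_of_exponent_le h (abs_le.1 hq).2
    have := (Real.rpow_pos_of_pos hb (-p)).le; linarith
  · have h3 : b ^ q ≤ b ^ (-p) :=
      Real.rpow_le_rpow_of_exponent_ge hb h.le (by linarith [(abs_le.1 hq).1])
    have := (Real.rpow_pos_of_pos hb p).le; linarith

lemma my_log_rpow_bound {b e : ℝ} (hb : 0 < b) (he : |e| ≤ 1/2) :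
    |Real.log b| * b ^ e ≤ 8 * (b ^ (3/4:ℝ) + b ^ (-(3/4):ℝ)) := by
  have hbe := (Real.rpow_pos_of_pos hb e).le
  have h1 := my_abs_log_le hb
  have he' := abs_le.1 he
  have c1 : b ^ (4⁻¹ + e) ≤ b ^ (3/4:ℝ) + b ^ (-(3/4:ℝ)) :=
    my_rpow_le hb (abs_le.2 (by constructor <;> [linarith; linarith]))
  have c2 : b ^ (-(4⁻¹:ℝ) + e) ≤ b ^ (3/4:ℝ) + b ^ (-(3/4:ℝ)) :=
    my_rpow_le hb (abs_le.2 (by constructor <;> [linarith; linarith]))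
  have key : (b ^ (4⁻¹:ℝ) + b ^ (-(4⁻¹:ℝ))) * b ^ e
      ≤ 2 * (b ^ (3/4:ℝ) + b ^ (-(3/4:ℝ))) := by
    rw [add_mul, ← Real.rpow_add hb, ← Real.rpow_add hb]; linarith
  have step : |Real.log b| * b ^ e ≤ 4 * ((b ^ (4⁻¹:ℝ) + b ^ (-(4⁻¹:ℝ))) * b ^ e) := by
    have := mul_le_mul_of_nonneg_right h1 hbe
    linarith [this]
  linarith

lemma my_intLog {c : ℝ} (hc : 0 < c) :
    IntegrableOn (fun u : ℝ => Real.exp (-(c * u)) * Real.log u) (Ioi 0) := by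
  have g1 := my_gammaScaled hc (r := (4⁻¹:ℝ)) (by norm_num)
  have g2 := my_gammaScaled hc (r := (-(4⁻¹:ℝ))) (by norm_num)
  have hg : IntegrableOn (fun u : ℝ =>
      4 * (u ^ (4⁻¹:ℝ) * Real.exp (-(c*u)) + u ^ (-(4⁻¹:ℝ)) * Real.exp (-(c*u)))) (Ioi 0) :=
    (g1.add g2).const_mul 4
  refine hg.mono' ?_ ?_
  · refine ContinuousOn.aestronglyMeasurable ?_ measurableSet_Ioi
    exact ((Real.continuous_exp.comp (continuous_const.mul continuous_id).neg).continuousOn).mul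
      (Real.continuousOn_log.mono (fun x hx => ne_of_gt hx))
  · filter_upwards [ae_restrict_mem measurableSet_Ioi] with u hu
    have hu' : (0:ℝ) < u := hu
    have h := my_abs_log_le hu'
    have e0 := (Real.exp_pos (-(c*u))).le
    rw [norm_mul, Real.norm_eq_abs, Real.norm_eq_abs, Real.abs_exp]
    nlinarith [abs_nonneg (Real.log u)]

lemma my_boundA {c : ℝ} (hc : 0 < c) :
    IntegrableOn (fun t : ℝ => (t^2-1) ^ (3/4:ℝ) * Real.exp (-(c*t))) (Ioi 1) := by
  have g : IntegrableOn (fun u : ℝ => u ^ (2:ℝ) * Real.exp (-(c*u))) (Ioi 1) :=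
    (my_gammaScaled hc (r := 2) (by norm_num)).mono_set (Ioi_subset_Ioi zero_le_one)
  refine g.mono' ?_ ?_
  · refine ContinuousOn.aestronglyMeasurable ?_ measurableSet_Ioi
    refine ContinuousOn.mul (ContinuousOn.rpow_const ?_ ?_) ?_
    · exact ((continuous_pow 2).sub continuous_const).continuousOn
    · intro t ht; left; have : (1:ℝ) < t := ht; nlinarith
    · exact (Real.continuous_exp.comp (continuous_const.mul continuous_id).neg).continuousOn
  · filter_upwards [ae_restrict_mem measurableSet_Ioi] with t ht
    have ht' : (1:ℝ) < t := ht
    have htt : (0:ℝ) < t^2 - 1 := by nlinarith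
    have b1 : (t^2-1:ℝ) ^ (3/4:ℝ) ≤ (t^2:ℝ) ^ (3/4:ℝ) :=
      Real.rpow_le_rpow htt.le (by nlinarith) (by norm_num)
    have b2 : (t^2:ℝ) ^ (3/4:ℝ) ≤ (t^2:ℝ) ^ (1:ℝ) :=
      Real.rpow_le_rpow_of_exponent_le (by nlinarith) (by norm_num)
    have b3 : (t:ℝ) ^ (2:ℝ) = t^2 := by
      rw [show (2:ℝ) = ((2:ℕ):ℝ) by norm_num, Real.rpow_natCast]
    rw [norm_mul, Real.norm_eq_abs, Real.norm_eq_abs, Real.abs_exp,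
      abs_of_pos (Real.rpow_pos_of_pos htt _), b3]
    rw [Real.rpow_one] at b2
    have := (Real.exp_pos (-(c*t))).le
    nlinarith

lemma my_boundB {c : ℝ} (hc : 0 < c) :
    IntegrableOn (fun t : ℝ => (t^2-1) ^ (-(3/4):ℝ) * Real.exp (-(c*t))) (Ioi 1) := by
  have hshift := my_integrableOn_comp_add_right_Ioi
    (fun u : ℝ => u ^ (-(3/4):ℝ) * Real.exp (-(c*u))) 1 (-1)
  rw [show (1:ℝ) + -1 = 0 by norm_num] at hshift
  have g : IntegrableOn (fun x : ℝ => (x + -1) ^ (-(3/4):ℝ) * Real.exp (-(c*(x + -1)))) (Ioi 1) :=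
    hshift.2 (my_gammaScaled hc (by norm_num))
  refine g.mono' ?_ ?_
  · refine ContinuousOn.aestronglyMeasurable ?_ measurableSet_Ioi
    refine ContinuousOn.mul (ContinuousOn.rpow_const ?_ ?_) ?_
    · exact ((continuous_pow 2).sub continuous_const).continuousOn
    · intro t ht; left; have : (1:ℝ) < t := ht; nlinarith
    · exact (Real.continuous_exp.comp (continuous_const.mul continuous_id).neg).continuousOn
  · filter_upwards [ae_restrict_mem measurableSet_Ioi] with t ht
    have ht' : (1:ℝ) < t := ht
    have h1 : (0:ℝ) < t - 1 := by linarith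
    have h2 : (0:ℝ) < t + 1 := by linarith
    have htt : (0:ℝ) < t^2 - 1 := by nlinarith
    have hfac : (t^2-1:ℝ) ^ (-(3/4):ℝ) = (t-1) ^ (-(3/4):ℝ) * (t+1) ^ (-(3/4):ℝ) := by
      rw [show t^2-1 = (t-1)*(t+1) by ring, Real.mul_rpow h1.le h2.le]
    have hle1 : (t+1:ℝ) ^ (-(3/4):ℝ) ≤ 1 :=
      Real.rpow_le_one_of_one_le_of_nonpos (by linarith) (by norm_num)
    have hle2 : Real.exp (-(c*t)) ≤ Real.exp (-(c*(t-1))) := by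
      apply Real.exp_le_exp.2; nlinarith
    rw [norm_mul, Real.norm_eq_abs, Real.norm_eq_abs, Real.abs_exp,
      abs_of_pos (Real.rpow_pos_of_pos htt _), hfac, show t + -1 = t - 1 by ring]
    have p1 := (Real.rpow_pos_of_pos h1 (-(3/4):ℝ)).le
    have p2 := (Real.rpow_pos_of_pos h2 (-(3/4):ℝ)).le
    have e1 := (Real.exp_pos (-(c*t))).le
    calc (t-1:ℝ) ^ (-(3/4):ℝ) * (t+1) ^ (-(3/4):ℝ) * Real.exp (-(c*t))
        ≤ (t-1:ℝ) ^ (-(3/4):ℝ) * 1 * Real.exp (-(c*(t-1))) := by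
          apply mul_le_mul (mul_le_mul le_rfl hle1 p2 p1) hle2 e1
          positivity
      _ = (t-1:ℝ) ^ (-(3/4):ℝ) * Real.exp (-(c*(t-1))) := by ring

lemma my_expInt {c : ℝ} (hc : 0 < c) (a : ℝ) :
    IntegrableOn (fun x : ℝ => Real.exp (-(c*x))) (Ioi a) := by
  simpa [neg_mul] using exp_neg_integrableOn_Ioi a hc

lemma my_exp_int {c : ℝ} (hc : 0 < c) : ∫ x in Ioi (0:ℝ), Real.exp (-(c*x)) = c⁻¹ := by
  have h := integral_comp_mul_left_Ioi (fun x => Real.exp (-x)) 0 hc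
  simpa [integral_exp_neg_Ioi, -integral_comp_neg_Ioi] using h

lemma my_log_int {c : ℝ} (hc : 0 < c) :
    ∫ x in Ioi (0:ℝ), Real.exp (-(c*x)) * Real.log x
      = c⁻¹ * ((∫ u in Ioi (0:ℝ), Real.exp (-u) * Real.log u) - Real.log c) := by
  have h := integral_comp_mul_left_Ioi (fun v => Real.exp (-v) * Real.log v) 0 hc
  simp only [mul_zero] at h
  have split : ∫ x in Ioi (0:ℝ), Real.exp (-(c*x)) * Real.log (c*x)
      = (∫ x in Ioi (0:ℝ), Real.exp (-(c*x)) * Real.log c)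
        + ∫ x in Ioi (0:ℝ), Real.exp (-(c*x)) * Real.log x := by
    rw [← integral_add ((my_expInt hc 0).mul_const _) (my_intLog hc)]
    refine setIntegral_congr_fun measurableSet_Ioi (fun x hx => ?_)
    rw [Real.log_mul hc.ne' (ne_of_gt hx)]; ring
  have const_part : ∫ x in Ioi (0:ℝ), Real.exp (-(c*x)) * Real.log c = c⁻¹ * Real.log c := by
    rw [integral_mul_const, my_exp_int hc]
  rw [split, const_part, smul_eq_mul] at h
  rw [mul_sub]; linarith

lemma my_tendsto_explog {c : ℝ} (hc : 0 < c) :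
    Filter.Tendsto (fun v : ℝ => Real.exp (-(c*v)) * Real.log v) Filter.atTop (nhds 0) := by
  have hg : Filter.Tendsto (fun v : ℝ => v * Real.exp (-(c*v))) Filter.atTop (nhds 0) := by
    have := tendsto_rpow_mul_exp_neg_mul_atTop_nhds_zero 1 c hc
    refine this.congr (fun x => ?_)
    rw [Real.rpow_one, neg_mul]
  refine squeeze_zero' ?_ ?_ hg
  · filter_upwards [Filter.eventually_ge_atTop (1:ℝ)] with v hv
    exact mul_nonneg (Real.exp_pos _).le (Real.log_nonneg hv)
  · filter_upwards [Filter.eventually_ge_atTop (1:ℝ)] with v hv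
    have : Real.log v ≤ v := by
      have := Real.log_le_sub_one_of_pos (by linarith : (0:ℝ) < v); linarith
    have e0 := (Real.exp_pos (-(c*v))).le
    nlinarith

lemma my_Ioi2_int {c : ℝ} (hc : 0 < c) :
    ∫ v in Ioi (2:ℝ), Real.exp (-(c*v)) * Real.log v
      = c⁻¹ * Real.exp (-(c*2)) * Real.log 2 + c⁻¹ * ∫ x in Ioi (c*2), Real.exp (-x) / x := by
  set F' : ℝ → ℝ := fun v => Real.exp (-(c*v)) * Real.log v - Real.exp (-(c*v)) / (c*v) with hF'
  have int1 : IntegrableOn (fun v : ℝ => Real.exp (-(c*v)) * Real.log v) (Ioi 2) :=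
    (my_intLog hc).mono_set (Ioi_subset_Ioi (by norm_num))
  have int2 : IntegrableOn (fun v : ℝ => Real.exp (-(c*v)) / (c*v)) (Ioi 2) := by
    refine ((my_expInt hc 2).mul_const (2*c)⁻¹).mono' ?_ ?_
    · refine ContinuousOn.aestronglyMeasurable (ContinuousOn.div ?_ ?_ ?_) measurableSet_Ioi
      · exact (Real.continuous_exp.comp (continuous_const.mul continuous_id).neg).continuousOn
      · exact (continuous_const.mul continuous_id).continuousOn
      · intro v hv; have : (2:ℝ) < v := hv; positivity
    · filter_upwards [ae_restrict_mem measurableSet_Ioi] with v hv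
      have hv' : (2:ℝ) < v := hv
      have h1 : (0:ℝ) < c*v := by positivity
      rw [Real.norm_eq_abs, abs_of_pos (by positivity)]
      rw [div_eq_mul_inv]
      refine mul_le_mul le_rfl ?_ (by positivity) (Real.exp_pos _).le
      rw [inv_le_inv₀ h1 (by positivity)]
      nlinarith
  have fint : IntegrableOn F' (Ioi 2) := int1.sub int2
  have hderiv : ∀ x ∈ Ici (2:ℝ), HasDerivAt
      (fun v => -c⁻¹ * (Real.exp (-(c*v)) * Real.log v)) (F' x) x := by
    intro x hx
    have hx0 : (0:ℝ) < x := lt_of_lt_of_le (by norm_num) hx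
    have hE : HasDerivAt (fun v : ℝ => Real.exp (-(c*v))) (-c * Real.exp (-(c*x))) x := by
      have h1 : HasDerivAt (fun v : ℝ => -(c*v)) (-c) x := by
        simpa using (hasDerivAt_neg x).const_mul c
      simpa [mul_comm] using h1.exp
    have hL : HasDerivAt Real.log x⁻¹ x := Real.hasDerivAt_log (ne_of_gt hx0)
    have := (hE.mul hL).const_mul (-c⁻¹)
    refine this.congr_deriv ?_
    rw [hF']
    field_simp
    ring
  have htend : Filter.Tendsto (fun v => -c⁻¹ * (Real.exp (-(c*v)) * Real.log v))
      Filter.atTop (nhds 0) := by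
    have := (my_tendsto_explog hc).const_mul (-c⁻¹)
    simpa using this
  have key := integral_Ioi_of_hasDerivAt_of_tendsto' hderiv fint htend
  have hsub : ∫ v in Ioi (2:ℝ), F' v
      = (∫ v in Ioi (2:ℝ), Real.exp (-(c*v)) * Real.log v)
        - ∫ v in Ioi (2:ℝ), Real.exp (-(c*v)) / (c*v) := integral_sub int1 int2
  have hmul : ∫ v in Ioi (2:ℝ), Real.exp (-(c*v)) / (c*v)
      = c⁻¹ * ∫ x in Ioi (c*2), Real.exp (-x) / x := by
    have h := integral_comp_mul_left_Ioi (fun x => Real.exp (-x) / x) 2 hc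
    simpa [smul_eq_mul] using h
  rw [hsub, hmul] at key
  linear_combination key

lemma my_Ia {c : ℝ} (hc : 0 < c) :
    IntegrableOn (fun t : ℝ => Real.log (t-1) * Real.exp (-(c*t))) (Ioi 1) := by
  have f_int : IntegrableOn (fun u : ℝ => Real.log u * Real.exp (-(c*u)) * Real.exp (-c))
      (Ioi 0) := by
    have h0 : IntegrableOn (fun x : ℝ => Real.exp (-(c*x)) * Real.log x * Real.exp (-c))
        (Ioi 0) := (my_intLog hc).mul_const (Real.exp (-c))
    exact h0.congr_fun (fun x _ => by ring) measurableSet_Ioi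
  have hs := my_integrableOn_comp_add_right_Ioi
    (fun u => Real.log u * Real.exp (-(c*u)) * Real.exp (-c)) 1 (-1)
  rw [show (1:ℝ) + -1 = 0 by norm_num] at hs
  refine (hs.2 f_int).congr_fun (fun t _ => ?_) measurableSet_Ioi
  have e1 : Real.exp (-(c*(t-1))) * Real.exp (-c) = Real.exp (-(c*t)) := by
    rw [← Real.exp_add]; congr 1; ring
  beta_reduce
  rw [show t + -1 = t - 1 by ring, mul_assoc, e1]

lemma my_Ib {c : ℝ} (hc : 0 < c) :
    IntegrableOn (fun t : ℝ => Real.log (t+1) * Real.exp (-(c*t))) (Ioi 1) := by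
  have f_int : IntegrableOn (fun v : ℝ => Real.log v * Real.exp (-(c*v)) * Real.exp c)
      (Ioi 2) := by
    have h0 : IntegrableOn (fun x : ℝ => Real.exp (-(c*x)) * Real.log x * Real.exp c)
        (Ioi 2) :=
      ((my_intLog hc).mono_set (Ioi_subset_Ioi (by norm_num : (0:ℝ) ≤ 2))).mul_const (Real.exp c)
    exact h0.congr_fun (fun x _ => by ring) measurableSet_Ioi
  have hs := my_integrableOn_comp_add_right_Ioi
    (fun v => Real.log v * Real.exp (-(c*v)) * Real.exp c) 1 1
  rw [show (1:ℝ) + 1 = 2 by norm_num] at hs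
  refine (hs.2 f_int).congr_fun (fun t _ => ?_) measurableSet_Ioi
  have e1 : Real.exp (-(c*(t+1))) * Real.exp c = Real.exp (-(c*t)) := by
    rw [← Real.exp_add]; congr 1; ring
  beta_reduce
  rw [mul_assoc, e1]

lemma my_Ea {c : ℝ} (hc : 0 < c) :
    ∫ t in Ioi (1:ℝ), Real.log (t-1) * Real.exp (-(c*t))
      = Real.exp (-c) * (c⁻¹ * ((∫ u in Ioi (0:ℝ), Real.exp (-u) * Real.log u) - Real.log c)) := by
  have hs := my_integral_comp_add_right_Ioi
    (fun u => Real.log u * Real.exp (-(c*u)) * Real.exp (-c)) 1 (-1)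
  rw [show (1:ℝ) + -1 = 0 by norm_num] at hs
  have hl : ∫ t in Ioi (1:ℝ), Real.log (t-1) * Real.exp (-(c*t))
      = ∫ x in Ioi (1:ℝ), Real.log (x + -1) * Real.exp (-(c*(x + -1))) * Real.exp (-c) := by
    refine setIntegral_congr_fun measurableSet_Ioi (fun t _ => ?_)
    have e1 : Real.exp (-(c*(t-1))) * Real.exp (-c) = Real.exp (-(c*t)) := by
      rw [← Real.exp_add]; congr 1; ring
    rw [show t + -1 = t - 1 by ring, mul_assoc, e1]
  have hr : ∫ u in Ioi (0:ℝ), Real.log u * Real.exp (-(c*u)) * Real.exp (-c)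
      = (∫ u in Ioi (0:ℝ), Real.exp (-(c*u)) * Real.log u) * Real.exp (-c) := by
    rw [← integral_mul_const]
    exact setIntegral_congr_fun measurableSet_Ioi (fun u _ => by ring)
  rw [hl, hs, hr, my_log_int hc]; ring

lemma my_Eb {c : ℝ} (hc : 0 < c) :
    ∫ t in Ioi (1:ℝ), Real.log (t+1) * Real.exp (-(c*t))
      = Real.exp c * ∫ v in Ioi (2:ℝ), Real.exp (-(c*v)) * Real.log v := by
  have hs := my_integral_comp_add_right_Ioi
    (fun v => Real.log v * Real.exp (-(c*v)) * Real.exp c) 1 1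
  rw [show (1:ℝ) + 1 = 2 by norm_num] at hs
  have hl : ∫ t in Ioi (1:ℝ), Real.log (t+1) * Real.exp (-(c*t))
      = ∫ x in Ioi (1:ℝ), Real.log (x + 1) * Real.exp (-(c*(x + 1))) * Real.exp c := by
    refine setIntegral_congr_fun measurableSet_Ioi (fun t _ => ?_)
    have e1 : Real.exp (-(c*(t+1))) * Real.exp c = Real.exp (-(c*t)) := by
      rw [← Real.exp_add]; congr 1; ring
    rw [mul_assoc, e1]
  have hr : ∫ v in Ioi (2:ℝ), Real.log v * Real.exp (-(c*v)) * Real.exp c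
      = (∫ v in Ioi (2:ℝ), Real.exp (-(c*v)) * Real.log v) * Real.exp c := by
    rw [← integral_mul_const]
    exact setIntegral_congr_fun measurableSet_Ioi (fun v _ => by ring)
  rw [hl, hs, hr]; ring

lemma my_eval {c : ℝ} (hc : 0 < c) :
    ∫ t in Ioi (1:ℝ), Real.log (t^2-1) * Real.exp (-(c*t))
      = c⁻¹ * ((∫ x in Ioi (c*2), Real.exp (-x)/x) * Real.exp c
         + ((∫ u in Ioi (0:ℝ), Real.exp (-u) * Real.log u) - Real.log c + Real.log 2)
            * Real.exp (-c)) := by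
  have hsplit : ∫ t in Ioi (1:ℝ), Real.log (t^2-1) * Real.exp (-(c*t))
      = (∫ t in Ioi (1:ℝ), Real.log (t-1) * Real.exp (-(c*t)))
        + ∫ t in Ioi (1:ℝ), Real.log (t+1) * Real.exp (-(c*t)) := by
    rw [← integral_add (my_Ia hc) (my_Ib hc)]
    refine setIntegral_congr_fun measurableSet_Ioi (fun t ht => ?_)
    have h1 : (1:ℝ) < t := ht
    rw [show t^2-1 = (t-1)*(t+1) by ring,
      Real.log_mul (by intro h; nlinarith) (by intro h; nlinarith)]
    ring
  rw [hsplit, my_Ea hc, my_Eb hc, my_Ioi2_int hc]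
  have e1 : Real.exp c * Real.exp (-(c*2)) = Real.exp (-c) := by
    rw [← Real.exp_add]; congr 1; ring
  linear_combination (c⁻¹ * Real.log 2) * e1

/-- The incomplete gamma function `Γ(0,a) = ∫_a^∞ e^{-t} t^{-1} dt`. -/
noncomputable def incGammaZero (a : ℝ) : ℝ := ∫ t in Ioi a, Real.exp (-t) / t

/-- For `y > 0`, the derivative with respect to `s` at `s = 1` of
`∫_1^∞ (t²-1)^{s-1} e^{-2πty} dt` equals
`(1/(2πy)) (Γ(0,4πy) e^{2πy} + (Γ'(1) - log(πy)) e^{-2πy})`,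
where `Γ'(1) = ∫_0^∞ e^{-u} log u du`. -/
theorem deriv_integral_rpow_exp (y : ℝ) (hy : 0 < y) :
    HasDerivAt (fun s : ℝ => ∫ t in Ioi (1 : ℝ), (t ^ 2 - 1) ^ (s - 1) * Real.exp (-(2 * π * t * y)))
      ((1 / (2 * π * y)) * (incGammaZero (4 * π * y) * Real.exp (2 * π * y)
        + ((∫ u in Ioi (0 : ℝ), Real.exp (-u) * Real.log u) - Real.log (π * y))
          * Real.exp (-(2 * π * y)))) 1 := by
  have hπy : 0 < π * y := by positivity
  have hc : (0:ℝ) < 2 * π * y := by positivity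
  have harg : ∀ t : ℝ, -(2*π*t*y) = -(2*π*y*t) := fun t => by ring
  simp_rw [harg]
  have base_cont : ContinuousOn (fun t : ℝ => t^2 - 1) (Ioi 1) :=
    ((continuous_pow 2).sub continuous_const).continuousOn
  have exp_cont : ContinuousOn (fun t : ℝ => Real.exp (-(2*π*y*t))) (Ioi 1) :=
    (Real.continuous_exp.comp (continuous_const.mul continuous_id).neg).continuousOn
  have base_ne : ∀ t ∈ Ioi (1:ℝ), t^2 - 1 ≠ 0 := by
    intro t ht; have : (1:ℝ) < t := ht; nlinarith
  have hF_meas : ∀ᶠ s in nhds (1:ℝ), AEStronglyMeasurable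
      (fun t : ℝ => (t^2-1) ^ (s-1) * Real.exp (-(2*π*y*t))) (volume.restrict (Ioi 1)) := by
    refine Filter.Eventually.of_forall fun s => ContinuousOn.aestronglyMeasurable ?_
      measurableSet_Ioi
    exact (base_cont.rpow_const (fun t ht => Or.inl (base_ne t ht))).mul exp_cont
  have hF_int : IntegrableOn
      (fun t : ℝ => (t^2-1) ^ ((1:ℝ)-1) * Real.exp (-(2*π*y*t))) (Ioi 1) :=
    (my_expInt hc 1).congr_fun
      (fun t _ => by rw [sub_self, Real.rpow_zero, one_mul]) measurableSet_Ioi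
  have hF'_meas : AEStronglyMeasurable
      (fun t : ℝ => (t^2-1) ^ ((1:ℝ)-1) * Real.log (t^2-1) * Real.exp (-(2*π*y*t)))
      (volume.restrict (Ioi 1)) := by
    refine ContinuousOn.aestronglyMeasurable ?_ measurableSet_Ioi
    exact ((base_cont.rpow_const (fun t ht => Or.inl (base_ne t ht))).mul
      (base_cont.log base_ne)).mul exp_cont
  have h_bound : ∀ᵐ t ∂(volume.restrict (Ioi (1:ℝ))), ∀ s ∈ Metric.ball (1:ℝ) (1/2),
      ‖(t^2-1) ^ (s-1) * Real.log (t^2-1) * Real.exp (-(2*π*y*t))‖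
        ≤ 8 * ((t^2-1) ^ (3/4:ℝ) + (t^2-1) ^ (-(3/4):ℝ)) * Real.exp (-(2*π*y*t)) := by
    filter_upwards [ae_restrict_mem measurableSet_Ioi] with t ht
    intro s hs
    have h1 : (1:ℝ) < t := ht
    have hb : (0:ℝ) < t^2 - 1 := by nlinarith
    have hsd : |s - 1| ≤ 1/2 := by
      have := Metric.mem_ball.1 hs; rw [Real.dist_eq] at this; linarith
    have hbd := my_log_rpow_bound hb hsd
    have h3 := mul_le_mul_of_nonneg_right hbd (Real.exp_pos (-(2*π*y*t))).le
    rw [norm_mul, norm_mul, Real.norm_eq_abs, Real.norm_eq_abs, Real.norm_eq_abs,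
      Real.abs_exp, abs_of_pos (Real.rpow_pos_of_pos hb _)]
    have h2 : (t^2-1) ^ (s-1) * |Real.log (t^2-1)| * Real.exp (-(2*π*y*t))
        = |Real.log (t^2-1)| * (t^2-1) ^ (s-1) * Real.exp (-(2*π*y*t)) := by ring
    rw [h2]
    exact h3
  have bound_int : IntegrableOn
      (fun t : ℝ => 8 * ((t^2-1) ^ (3/4:ℝ) + (t^2-1) ^ (-(3/4):ℝ)) * Real.exp (-(2*π*y*t)))
      (Ioi 1) := by
    have h0 : IntegrableOn (fun t : ℝ =>
        8 * ((t^2-1) ^ (3/4:ℝ) * Real.exp (-(2*π*y*t))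
          + (t^2-1) ^ (-(3/4):ℝ) * Real.exp (-(2*π*y*t)))) (Ioi 1) :=
      ((my_boundA hc).add (my_boundB hc)).const_mul 8
    exact h0.congr_fun (fun t _ => by ring) measurableSet_Ioi
  have h_diff : ∀ᵐ t ∂(volume.restrict (Ioi (1:ℝ))), ∀ s ∈ Metric.ball (1:ℝ) (1/2),
      HasDerivAt (fun x : ℝ => (t^2-1) ^ (x-1) * Real.exp (-(2*π*y*t)))
        ((t^2-1) ^ (s-1) * Real.log (t^2-1) * Real.exp (-(2*π*y*t))) s := by
    filter_upwards [ae_restrict_mem measurableSet_Ioi] with t ht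
    intro s _
    have h1 : (1:ℝ) < t := ht
    have hb : (0:ℝ) < t^2 - 1 := by nlinarith
    have h := (Real.hasStrictDerivAt_const_rpow hb (s-1)).hasDerivAt
    have h2 := HasDerivAt.comp s h ((hasDerivAt_id s).sub_const 1)
    have h3 := h2.mul_const (Real.exp (-(2*π*y*t)))
    refine h3.congr_deriv ?_
    ring
  have key := hasDerivAt_integral_of_dominated_loc_of_deriv_le (𝕜 := ℝ)
    (μ := volume.restrict (Ioi (1:ℝ))) (x₀ := (1:ℝ)) (s := Metric.ball (1:ℝ) (1/2))
    (F := fun s t => (t^2-1) ^ (s-1) * Real.exp (-(2*π*y*t)))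
    (F' := fun s t => (t^2-1) ^ (s-1) * Real.log (t^2-1) * Real.exp (-(2*π*y*t)))
    (bound := fun t => 8 * ((t^2-1) ^ (3/4:ℝ) + (t^2-1) ^ (-(3/4):ℝ)) * Real.exp (-(2*π*y*t)))
    (Metric.ball_mem_nhds _ (by norm_num)) hF_meas hF_int hF'_meas h_bound bound_int h_diff
  have hval : (∫ t in Ioi (1:ℝ),
        (t^2-1) ^ ((1:ℝ)-1) * Real.log (t^2-1) * Real.exp (-(2*π*y*t)))
      = (1 / (2 * π * y)) * (incGammaZero (4 * π * y) * Real.exp (2 * π * y)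
        + ((∫ u in Ioi (0 : ℝ), Real.exp (-u) * Real.log u) - Real.log (π * y))
          * Real.exp (-(2 * π * y))) := by
    have step1 : (∫ t in Ioi (1:ℝ),
          (t^2-1) ^ ((1:ℝ)-1) * Real.log (t^2-1) * Real.exp (-(2*π*y*t)))
        = ∫ t in Ioi (1:ℝ), Real.log (t^2-1) * Real.exp (-(2*π*y*t)) := by
      refine setIntegral_congr_fun measurableSet_Ioi (fun t _ => ?_)
      rw [sub_self, Real.rpow_zero, one_mul]
    rw [step1, my_eval hc]
    rw [show 2*π*y*2 = 4*π*y by ring]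
    have hlog : Real.log (2*π*y) = Real.log 2 + Real.log (π*y) := by
      rw [show 2*π*y = 2*(π*y) by ring, Real.log_mul two_ne_zero (ne_of_gt hπy)]
    rw [hlog, incGammaZero]
    ring
  rw [← hval]
  exact key.2
end

section
/- Let W*(z) = Γ(0, 4πy) e^{4πy} e^{2πiz} for z = x + iy in the upper half plane. Then for n ≥ 1, (d/dz) W*(nz) = (i/(2y)) e^{2πinz}, where d/dz = (1/2)(∂/∂x - i∂/∂y). -/
open Real MeasureTheory Set Complex

/-- `W*(z) = Γ(0,4πy) e^{4πy} e^{2πiz}` for `z = x+iy`. -/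
noncomputable def Wstar (z : ℂ) : ℂ :=
  (incGammaZero (4 * π * z.im) : ℂ) * Real.exp (4 * π * z.im) * Complex.exp (2 * π * I * z)

/-- The Wirtinger derivative `d/dz = (1/2)(∂/∂x - i ∂/∂y)`. -/
noncomputable def wdz (f : ℂ → ℂ) (z : ℂ) : ℂ :=
  (1 / 2) * (fderiv ℝ f z 1 - I * fderiv ℝ f z I)

lemma intOn (c : ℝ) (hc : 0 < c) : IntegrableOn (fun t => Real.exp (-t) / t) (Ioi c) := by
  have h := (exp_neg_integrableOn_Ioi c (by norm_num : (0:ℝ) < 1)).const_mul c⁻¹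
  refine h.mono' ?_ ?_
  · exact (((Real.measurable_exp.comp measurable_neg).div
      measurable_id).aestronglyMeasurable).restrict
  · filter_upwards [ae_restrict_mem measurableSet_Ioi] with t ht
    have ht' : c < t := ht
    rw [Real.norm_eq_abs, abs_div, abs_of_pos (Real.exp_pos _), abs_of_pos (hc.trans ht'),
      div_le_iff₀ (hc.trans ht')]
    calc Real.exp (-t) = c⁻¹ * Real.exp (-1 * t) * c := by field_simp
      _ ≤ c⁻¹ * Real.exp (-1*t) * t :=
          mul_le_mul_of_nonneg_left ht'.le (by positivity)

lemma hasDerivAt_incGammaZero {a : ℝ} (ha : 0 < a) :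
    HasDerivAt incGammaZero (-(Real.exp (-a) / a)) a := by
  set c := a / 2 with hcdef
  have hc : 0 < c := by positivity
  have hca : c < a := by rw [hcdef]; linarith
  have hkey : ∀ b ∈ Ioi c, incGammaZero b
      = incGammaZero c - ∫ t in c..b, Real.exp (-t) / t := by
    intro b hb
    have hb' : c ≤ b := le_of_lt hb
    have h1 : Ioc c b ∪ Ioi b = Ioi c := Ioc_union_Ioi_eq_Ioi hb'
    have h2 : incGammaZero c
        = (∫ t in Ioc c b, Real.exp (-t)/t) + ∫ t in Ioi b, Real.exp (-t)/t := by
      rw [incGammaZero, ← h1,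
        setIntegral_union (Ioc_disjoint_Ioi le_rfl) measurableSet_Ioi
          ((intOn c hc).mono_set (by rw [← h1]; exact subset_union_left))
          ((intOn c hc).mono_set (by rw [← h1]; exact subset_union_right))]
    rw [intervalIntegral.integral_of_le hb', incGammaZero, h2]; ring
  have hdi : HasDerivAt (fun b => incGammaZero c - ∫ t in c..b, Real.exp (-t)/t)
      (-(Real.exp (-a)/a)) a := by
    refine HasDerivAt.const_sub _ (intervalIntegral.integral_hasDerivAt_right ?_ ?_ ?_)
    · apply ContinuousOn.intervalIntegrable
      refine ((Real.continuous_exp.comp continuous_neg).continuousOn.div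
        continuousOn_id fun x hx => ?_)
      have : c ≤ x := by
        rcases hx with ⟨h1, h2⟩
        simpa [min_eq_left hca.le] using h1
      exact ne_of_gt (lt_of_lt_of_le hc this)
    · exact (((Real.measurable_exp.comp measurable_neg).div
        measurable_id).stronglyMeasurable).stronglyMeasurableAtFilter
    · exact ((Real.continuous_exp.comp continuous_neg).continuousAt).div
        continuousAt_id (ne_of_gt ha)
  exact hdi.congr_of_eventuallyEq
    (Filter.eventuallyEq_of_mem (Ioi_mem_nhds hca) hkey)

/-- For `n ≥ 1` and `z` in the upper half plane,
`(d/dz) W*(nz) = (i/(2y)) e^{2πinz}`. -/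
theorem wdz_Wstar (n : ℕ) (hn : 1 ≤ n) (z : ℂ) (hz : 0 < z.im) :
    wdz (fun w => Wstar (n * w)) z = (I / (2 * z.im)) * Complex.exp (2 * π * I * n * z) := by
  set y := z.im with hy
  set N : ℝ := (n : ℝ) with hN
  have hNpos : 0 < N := by rw [hN]; exact_mod_cast hn
  have harg : 0 < 4 * π * N * y := by positivity
  set A : ℝ → ℝ := fun t => incGammaZero (4 * π * N * t) * Real.exp (4 * π * N * t) with hA
  -- derivative of A
  have hinner : ∀ t : ℝ, HasDerivAt (fun s : ℝ => 4 * π * N * s) (4 * π * N) t := fun t => by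
    simpa using (hasDerivAt_id t).const_mul (4 * π * N)
  have hG : HasDerivAt (fun t => incGammaZero (4 * π * N * t))
      (-(Real.exp (-(4 * π * N * y)) / (4 * π * N * y)) * (4 * π * N)) y :=
    (hasDerivAt_incGammaZero harg).comp y (hinner y)
  have hE : HasDerivAt (fun t => Real.exp (4 * π * N * t))
      (Real.exp (4 * π * N * y) * (4 * π * N)) y :=
    (Real.hasDerivAt_exp _).comp y (hinner y)
  set a' : ℝ := -(Real.exp (-(4 * π * N * y)) / (4 * π * N * y)) * (4 * π * N) *
      Real.exp (4 * π * N * y) +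
      incGammaZero (4 * π * N * y) * (Real.exp (4 * π * N * y) * (4 * π * N)) with ha'
  have hAd : HasDerivAt A a' y := hG.mul hE
  -- fderiv of h₁ w = (A w.im : ℂ)
  have h1fd : HasFDerivAt (fun w : ℂ => (A w.im : ℂ))
      (Complex.ofRealCLM.comp ((a' • Complex.imCLM))) z :=
    Complex.ofRealCLM.hasFDerivAt.comp z
      (by have := hAd.comp_hasFDerivAt z Complex.imCLM.hasFDerivAt; exact this)
  -- fderiv of h₂
  have h2d : HasDerivAt (fun w : ℂ => Complex.exp (2 * π * I * n * w))
      (Complex.exp (2 * π * I * n * z) * (2 * π * I * n)) z :=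
    by simpa using ((hasDerivAt_id z).const_mul (2 * π * I * (n:ℂ))).cexp
  have h2fd : HasFDerivAt (fun w : ℂ => Complex.exp (2 * π * I * n * w))
      ((ContinuousLinearMap.smulRight (1 : ℂ →L[ℂ] ℂ)
        (Complex.exp (2 * π * I * n * z) * (2 * π * I * n))).restrictScalars ℝ) z :=
    h2d.hasFDerivAt.restrictScalars ℝ
  have hmul := h1fd.mul h2fd
  have heq : (fun w : ℂ => Wstar (n * w))
      = fun w : ℂ => (A w.im : ℂ) * Complex.exp (2 * π * I * n * w) := by
    funext w
    simp only [Wstar, hA, Complex.mul_im, Complex.natCast_re, Complex.natCast_im,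
      zero_mul, add_zero, Complex.ofReal_mul]
    rw [mul_assoc (4*π) N w.im, ← mul_assoc (4*π) N w.im]
    ring_nf
  rw [wdz, heq]
  rw [show (fun w : ℂ => (A w.im : ℂ) * Complex.exp (2 * π * I * n * w))
      = (fun w : ℂ => (A w.im : ℂ)) * (fun w : ℂ => Complex.exp (2 * π * I * n * w)) from rfl,
    hmul.fderiv]
  simp only [ContinuousLinearMap.add_apply, ContinuousLinearMap.smul_apply,
    ContinuousLinearMap.coe_restrictScalars', ContinuousLinearMap.smulRight_apply,
    ContinuousLinearMap.one_apply, ContinuousLinearMap.coe_comp', Function.comp_apply,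
    Complex.ofRealCLM_apply, Complex.imCLM_apply, Complex.I_im, Complex.one_im,
    smul_eq_mul, one_smul]
  have hy0 : y ≠ 0 := ne_of_gt hz
  have ha2 : a' = -(1/y) + 4*π*N*(A y) := by
    rw [ha', hA]
    rw [Real.exp_neg]
    field_simp
  rw [mul_zero, mul_one, ha2, ← hy]
  simp only [hN]
  push_cast
  linear_combination (-(π:ℂ) * I * (n:ℂ) * ((A y : ℝ):ℂ) * Complex.exp (2*π*I*(n:ℂ)*z)) * Complex.I_sq
end

section
/- Let g be a holomorphic function on the upper half plane satisfying g(z+1) = g(z), with Fourier expansion g(z) = Σ_{n≥1} a_n e^{2πinz}, and suppose |g(z)| ≤ C/y for all z = x+iy. Then for every z in the upper half plane, |∫_{i∞}^z g(w) dw| ≪ |log y| + 1, with implied constant depending only on C, where the integral is taken along the vertical line from i∞ to z. -/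
open Real Complex MeasureTheory Set

open Filter Metric Topology in
lemma vertAux_exp_decay (C : ℝ) (hC : 0 ≤ C) (g : ℂ → ℂ)
    (hg : DifferentiableOn ℂ g {w : ℂ | 0 < w.im})
    (hper : ∀ z : ℂ, 0 < z.im → g (z + 1) = g z)
    (hbd : ∀ z : ℂ, 0 < z.im → ‖g z‖ ≤ C / z.im) :
    ∀ z : ℂ, 1 ≤ z.im →
      ‖g z‖ ≤ (2 * C + 1) * Real.exp π * Real.exp (-(2 * π) * z.im) := by
  classical
  set U : Set ℂ := {w : ℂ | 0 < w.im}
  have hU : IsOpen U := isOpen_lt continuous_const Complex.continuous_im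
  set f : ℂ → ℂ := fun w => if 0 < w.im then g w else 0 with hf
  have hfper : Function.Periodic f 1 := by
    intro w
    by_cases h : 0 < w.im
    · have h1 : 0 < (w + 1).im := by simpa using h
      simp only [hf, if_pos h, if_pos h1]
      exact hper w h
    · have h1 : ¬ 0 < (w + 1).im := by simpa using h
      simp only [hf, if_neg h, if_neg h1]
  have hfeq : ∀ w ∈ U, f w = g w := fun w hw => if_pos hw
  have hdiff : ∀ w : ℂ, 0 < w.im → DifferentiableAt ℂ f w := by
    intro w hw
    have : DifferentiableAt ℂ g w := (hg w hw).differentiableAt (hU.mem_nhds hw)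
    exact this.congr_of_eventuallyEq <|
      (Filter.eventuallyEq_of_mem (hU.mem_nhds hw) hfeq)
  have him_tendsto : Tendsto Complex.im (comap Complex.im atTop) atTop := tendsto_comap
  have h_hol : ∀ᶠ z in comap Complex.im atTop, DifferentiableAt ℂ f z := by
    filter_upwards [him_tendsto.eventually_gt_atTop 0] with z hz using hdiff z hz
  have hfbd : ∀ w : ℂ, 0 < w.im → ‖f w‖ ≤ C / w.im := by
    intro w hw; rw [hfeq w hw]; exact hbd w hw
  have h_zer : Filter.ZeroAtFilter (comap Complex.im atTop) f := by
    have h1 : Tendsto (fun z : ℂ => C / z.im) (comap Complex.im atTop) (𝓝 0) :=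
      Tendsto.div_atTop tendsto_const_nhds him_tendsto
    rw [Filter.ZeroAtFilter, tendsto_zero_iff_norm_tendsto_zero]
    refine squeeze_zero' ?_ ?_ h1
    · exact Filter.Eventually.of_forall fun z => norm_nonneg _
    · filter_upwards [him_tendsto.eventually_gt_atTop 0] with z hz using hfbd z hz
  set F : ℂ → ℂ := Function.Periodic.cuspFunction 1 f with hFdef
  have hF0 : F 0 = 0 := Function.Periodic.cuspFunction_zero_of_zero_at_inf one_pos h_zer
  have hFd0 : DifferentiableAt ℂ F 0 :=
    Function.Periodic.differentiableAt_cuspFunction_zero one_pos hfper h_hol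
      h_zer.boundedAtFilter
  have him_inv : ∀ q : ℂ,
      (Function.Periodic.invQParam 1 q).im = -(1 / (2 * π)) * Real.log (‖q‖) := by
    intro q
    rw [Function.Periodic.im_invQParam]
    ring
  have hFd : ∀ q : ℂ, ‖q‖ < 1 → DifferentiableAt ℂ F q := by
    intro q hq
    rcases eq_or_ne q 0 with rfl | hq0
    · exact hFd0
    · have hz : 0 < (Function.Periodic.invQParam 1 q).im := by
        rw [him_inv q]
        have h1 : Real.log (‖q‖) < 0 :=
          Real.log_neg (norm_pos_iff.mpr hq0) hq
        have h2 : (0:ℝ) < 1 / (2 * π) := by positivity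
        nlinarith
      have := Function.Periodic.differentiableAt_cuspFunction one_ne_zero hfper
        (hdiff _ hz)
      rwa [Function.Periodic.qParam_right_inv one_ne_zero hq0] at this
  set r : ℝ := Real.exp (-π) with hrdef
  have hrpos : 0 < r := Real.exp_pos _
  have hr1 : r < 1 := Real.exp_lt_one_iff.mpr (neg_neg_iff_pos.mpr Real.pi_pos)
  have hDF : DifferentiableOn ℂ F (ball (0:ℂ) r) := by
    intro q hq
    have : ‖q‖ < 1 := by
      rw [mem_ball_zero_iff] at hq
      exact lt_trans hq hr1
    exact (hFd q this).differentiableWithinAt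
  have hmaps : MapsTo F (ball (0:ℂ) r) (ball (F 0) (2 * C + 1)) := by
    intro q hq
    rw [mem_ball_zero_iff] at hq
    rw [hF0, mem_ball_zero_iff]
    rcases eq_or_ne q 0 with rfl | hq0
    · rw [hF0]; simp only [norm_zero]; linarith
    · have heq : F q = f (Function.Periodic.invQParam 1 q) :=
        Function.Periodic.cuspFunction_eq_of_nonzero 1 f hq0
      have hlog : Real.log (‖q‖) < -π := by
        have := Real.log_lt_log (norm_pos_iff.mpr hq0) hq
        rwa [Real.log_exp] at this
      have hz : (1:ℝ) / 2 < (Function.Periodic.invQParam 1 q).im := by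
        have hπ : 0 < π := Real.pi_pos
        have h3 : 1 / (2 * π) * π < 1 / (2 * π) * (-Real.log (‖q‖)) :=
          mul_lt_mul_of_pos_left (by linarith) (by positivity)
        have h4 : 1 / (2 * π) * π = 1 / 2 := by field_simp
        rw [him_inv q]
        nlinarith
      have hz0 : 0 < (Function.Periodic.invQParam 1 q).im := lt_trans one_half_pos hz
      calc ‖F q‖ = ‖f (Function.Periodic.invQParam 1 q)‖ := by
            rw [heq]
        _ ≤ C / (Function.Periodic.invQParam 1 q).im := hfbd _ hz0
        _ ≤ C / (1 / 2) := by gcongr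
        _ = 2 * C := by ring
        _ < 2 * C + 1 := by linarith
  -- Schwarz lemma
  intro z hz
  have hz0 : 0 < z.im := lt_of_lt_of_le one_pos hz
  set q : ℂ := Function.Periodic.qParam 1 z with hqdef
  have habsq : ‖q‖ = Real.exp (-(2 * π) * z.im) := by
    rw [hqdef, Function.Periodic.norm_qParam]
    norm_num
  have hqball : q ∈ ball (0:ℂ) r := by
    rw [mem_ball_zero_iff]
    show ‖q‖ < r
    rw [habsq, hrdef, Real.exp_lt_exp]
    nlinarith [Real.pi_pos]
  have hSch := Complex.dist_le_div_mul_dist_of_mapsTo_ball hDF (hmaps.mono_right ball_subset_closedBall) hqball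
  rw [hF0, dist_zero_right, dist_zero_right] at hSch
  have hFq : F q = f z := Function.Periodic.eq_cuspFunction one_ne_zero hfper z
  have hfz : f z = g z := hfeq z hz0
  rw [hFq, hfz] at hSch
  have : ‖q‖ = Real.exp (-(2 * π) * z.im) := habsq
  rw [this] at hSch
  calc ‖g z‖ = ‖g z‖ := rfl
    _ ≤ (2 * C + 1) / r * Real.exp (-(2 * π) * z.im) := hSch
    _ = (2 * C + 1) * Real.exp π * Real.exp (-(2 * π) * z.im) := by
        rw [hrdef, div_eq_mul_inv, ← Real.exp_neg, neg_neg]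

/-- The antiderivative `F(z) = ∫_{i∞}^z g(w) dw` along the vertical line through `z`:
parametrizing `w = Re z + it`, `t ∈ (Im z, ∞)`, gives `F(z) = -i ∫_{Im z}^∞ g(Re z + it) dt`. -/
noncomputable def vertAntideriv (g : ℂ → ℂ) (z : ℂ) : ℂ :=
  -I * ∫ t in Ioi z.im, g (z.re + t * I)

/-- Let `g` be holomorphic on the upper half plane, `1`-periodic, with Fourier expansion
`g(z) = Σ_{n≥1} a_n e^{2πinz}`, and suppose `|g(z)| ≤ C/y`.  Then
`|∫_{i∞}^z g| ≪ |log y| + 1`, with implied constant depending only on `C`. -/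
theorem vertAntideriv_log_bound (C : ℝ) (hC : 0 ≤ C) :
    ∃ D : ℝ, 0 < D ∧ ∀ (g : ℂ → ℂ) (a : ℕ → ℂ),
      DifferentiableOn ℂ g {w : ℂ | 0 < w.im} →
      (∀ z : ℂ, 0 < z.im → g (z + 1) = g z) →
      (∀ z : ℂ, 0 < z.im → g z = ∑' n : ℕ, a (n + 1) * Complex.exp (2 * π * I * (n + 1) * z)) →
      (∀ z : ℂ, 0 < z.im → ‖g z‖ ≤ C / z.im) →
      ∀ z : ℂ, 0 < z.im →
        ‖vertAntideriv g z‖ ≤ D * (|Real.log z.im| + 1) := by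
  set K : ℝ := (2 * C + 1) * Real.exp π with hKdef
  have hK0 : 0 ≤ K := by positivity
  refine ⟨C + K + 1, by positivity, ?_⟩
  intro g a hg hper _ hbd z hz
  set x : ℝ := z.re with hxdef
  set y : ℝ := z.im with hydef
  have himt : ∀ t : ℝ, ((x : ℂ) + t * I).im = t := by intro t; simp
  set φ : ℝ → ℂ := fun t => g ((x : ℂ) + t * I) with hφdef
  have hdecay : ∀ t : ℝ, 1 ≤ t → ‖φ t‖ ≤ K * Real.exp (-(2 * π) * t) := by
    intro t ht
    have := vertAux_exp_decay C hC g hg hper hbd ((x : ℂ) + t * I) (by rw [himt]; exact ht)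
    rwa [himt t] at this
  have hdecay' : ∀ t : ℝ, 1 ≤ t → ‖φ t‖ ≤ K * Real.exp (-t) := by
    intro t ht
    refine (hdecay t ht).trans ?_
    have h1 : -(2 * π) * t ≤ -t := by nlinarith [Real.pi_gt_three]
    exact mul_le_mul_of_nonneg_left (Real.exp_le_exp.mpr h1) hK0
  have hcont : ContinuousOn φ (Ioi (0:ℝ)) := by
    apply hg.continuousOn.comp
    · exact (continuous_const.add (Complex.continuous_ofReal.mul continuous_const)).continuousOn
    · intro t ht
      simpa only [Set.mem_setOf_eq, himt, Set.mem_Ioi] using ht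
  set m : ℝ := max y 1 with hmdef
  have hym : y ≤ m := le_max_left _ _
  have h1m : 1 ≤ m := le_max_right _ _
  have hm0 : 0 < m := lt_of_lt_of_le one_pos h1m
  have i1 : IntegrableOn φ (Ioc y m) := by
    refine (hcont.mono ?_).integrableOn_Icc.mono_set Ioc_subset_Icc_self
    intro t ht
    exact lt_of_lt_of_le hz ht.1
  have i2 : IntegrableOn φ (Ioi m) := by
    refine Integrable.mono' ((exp_neg_integrableOn_Ioi m one_pos).const_mul K) ?_ ?_
    · refine (hcont.mono ?_).aestronglyMeasurable measurableSet_Ioi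
      intro t ht
      exact lt_of_lt_of_le hm0 (le_of_lt ht)
    · refine (ae_restrict_iff' measurableSet_Ioi).mpr (Filter.Eventually.of_forall ?_)
      intro t ht
      have := hdecay' t (le_of_lt (lt_of_le_of_lt h1m ht))
      simpa [neg_one_mul] using this
  have iall : IntegrableOn φ (Ioi y) := by
    rw [← Ioc_union_Ioi_eq_Ioi hym]
    exact i1.union i2
  -- the C/t dominating function on Ioc y m
  have iC : IntegrableOn (fun t : ℝ => C / t) (Ioc y m) := by
    have hcc : ContinuousOn (fun t : ℝ => C / t) (Icc y m) := by
      apply continuousOn_const.div continuousOn_id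
      intro t ht
      exact ne_of_gt (lt_of_lt_of_le hz ht.1)
    exact hcc.integrableOn_Icc.mono_set Ioc_subset_Icc_self
  have boundA : ∫ t in Ioc y m, ‖φ t‖ ≤ C * |Real.log y| := by
    have step1 : ∫ t in Ioc y m, ‖φ t‖ ≤ ∫ t in Ioc y m, C / t := by
      refine setIntegral_mono_on i1.norm iC measurableSet_Ioc ?_
      intro t ht
      have ht0 : 0 < t := lt_trans hz ht.1
      have := hbd ((x : ℂ) + t * I) (by rw [himt]; exact ht0)
      rwa [himt t] at this
    have step2 : ∫ t in Ioc y m, C / t = C * Real.log (m / y) := by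
      rw [← intervalIntegral.integral_of_le hym]
      rw [show (fun t : ℝ => C / t) = fun t : ℝ => C * (1 / t) by funext t; ring]
      have h0 : (0:ℝ) ∉ Set.uIcc y m := by
        rw [Set.mem_uIcc]
        push_neg
        constructor <;> intro h <;> linarith
      rw [intervalIntegral.integral_const_mul, integral_one_div h0]
    have step3 : Real.log (m / y) ≤ |Real.log y| := by
      rw [Real.log_div (ne_of_gt hm0) (ne_of_gt hz)]
      rcases le_or_gt y 1 with h | h
      · have : m = 1 := max_eq_right h
        rw [this, Real.log_one, zero_sub, abs_of_nonpos (Real.log_nonpos (le_of_lt hz) h)]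
      · have : m = y := max_eq_left (le_of_lt h)
        rw [this, sub_self]
        exact abs_nonneg _
    calc ∫ t in Ioc y m, ‖φ t‖ ≤ C * Real.log (m / y) := step1.trans_eq step2
      _ ≤ C * |Real.log y| := mul_le_mul_of_nonneg_left step3 hC
  have boundB : ∫ t in Ioi m, ‖φ t‖ ≤ K := by
    have step1 : ∫ t in Ioi m, ‖φ t‖ ≤ ∫ t in Ioi m, K * Real.exp (-t) := by
      refine setIntegral_mono_on i2.norm ?_ measurableSet_Ioi ?_
      · simpa [neg_one_mul, IntegrableOn] using (exp_neg_integrableOn_Ioi m one_pos).const_mul K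
      · intro t ht
        exact hdecay' t (le_of_lt (lt_of_le_of_lt h1m ht))
    have step2 : ∫ t in Ioi m, K * Real.exp (-t) = K * Real.exp (-m) := by
      rw [MeasureTheory.integral_const_mul, integral_exp_neg_Ioi]
    have step3 : Real.exp (-m) ≤ 1 := Real.exp_le_one_iff.mpr (by linarith)
    calc ∫ t in Ioi m, ‖φ t‖ ≤ K * Real.exp (-m) := step1.trans_eq step2
      _ ≤ K * 1 := mul_le_mul_of_nonneg_left step3 hK0
      _ = K := mul_one K
  have habs : ‖vertAntideriv g z‖ = ‖∫ t in Ioi y, φ t‖ := by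
    rw [vertAntideriv]
    rw [norm_mul]
    simp only [norm_neg, Complex.norm_I, one_mul]
    rfl
  have hsplit : ∫ t in Ioi y, ‖φ t‖ = (∫ t in Ioc y m, ‖φ t‖) + ∫ t in Ioi m, ‖φ t‖ := by
    rw [← Ioc_union_Ioi_eq_Ioi hym]
    exact setIntegral_union (Ioc_disjoint_Ioi le_rfl) measurableSet_Ioi i1.norm i2.norm
  have hfinal : ‖vertAntideriv g z‖ ≤ C * |Real.log y| + K := by
    rw [habs]
    calc ‖∫ t in Ioi y, φ t‖ ≤ ∫ t in Ioi y, ‖φ t‖ := norm_integral_le_integral_norm φ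
      _ = (∫ t in Ioc y m, ‖φ t‖) + ∫ t in Ioi m, ‖φ t‖ := hsplit
      _ ≤ C * |Real.log y| + K := add_le_add boundA boundB
  have habsnn : 0 ≤ |Real.log y| := abs_nonneg _
  nlinarith [hfinal]
end
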